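/- Let θ, z : (a,b) → ℝ be C¹ functions with z > 0 satisfying θ'(t)² + cos²θ(t)/z(t)² = 1 and z'(t) = sin θ(t) for all t. If θ'(t₀) = 0 at some t₀ ∈ (a,b), then there exists δ > 0 such that z(s) ≥ 1 for all s ∈ (t₀ - δ, t₀ + δ) ∩ (a,b). -/

import Mathlib

open Set Filter Topology

private lemma aux_right (a b t₀ : ℝ) (θ z θ' : ℝ → ℝ)
    (ht₀ : t₀ ∈ Set.Ioo a b)
    (hzpos : ∀ t ∈ Set.Ioo a b, 0 < z t)
    (hθ : ∀ t ∈ Set.Ioo a b, HasDerivAt θ (θ' t) t)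
    (hz' : ∀ t ∈ Set.Ioo a b, HasDerivAt z (Real.sin (θ t)) t)
    (heq : ∀ t ∈ Set.Ioo a b, (θ' t) ^ 2 + (Real.cos (θ t)) ^ 2 / (z t) ^ 2 = 1)
    (hz1 : z t₀ = 1) (hs0 : Real.sin (θ t₀) = 0) :
    ∃ δ > 0, ∀ s ∈ Set.Ioc t₀ (t₀ + δ), 1 ≤ z s := by
  have hcz : ContinuousAt z t₀ := (hz' t₀ ht₀).continuousAt
  have hmem : Set.Ioo a b ∩ z ⁻¹' Set.Ioi (1/2 : ℝ) ∈ 𝓝 t₀ := by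
    refine Filter.inter_mem (isOpen_Ioo.mem_nhds ht₀) (hcz.preimage_mem_nhds (Ioi_mem_nhds ?_))
    rw [hz1]; norm_num
  obtain ⟨ε, hε, hball⟩ := Metric.mem_nhds_iff.mp hmem
  set δ₀ := ε/2 with hδ₀def
  have hδ₀ : 0 < δ₀ := by positivity
  have hball' : ∀ t ∈ Set.Icc t₀ (t₀+δ₀), t ∈ Set.Ioo a b ∧ 1/2 < z t := by
    intro t ht
    have : t ∈ Metric.ball t₀ ε := by
      rw [Metric.mem_ball, Real.dist_eq, abs_lt]
      constructor <;> [linarith [ht.1]; linarith [ht.2]]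
    exact ⟨(hball this).1, (hball this).2⟩
  have hsub : Set.Icc t₀ (t₀+δ₀) ⊆ Set.Ioo a b := fun t ht => (hball' t ht).1
  have hzhalf : ∀ t ∈ Set.Icc t₀ (t₀+δ₀), 1/2 < z t := fun t ht => (hball' t ht).2
  by_contra hcon
  push_neg at hcon
  have hcon' : ∀ δ : ℝ, 0 < δ → ∃ s ∈ Set.Ioc t₀ (t₀+δ), z s < 1 := fun δ hδ => hcon δ hδ
  -- L1: interior minimum contradiction
  have L1 : ∀ p q s₀ : ℝ, t₀ ≤ p → p < q → q ≤ t₀ + δ₀ → 1 ≤ z p → 1 ≤ z q →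
      s₀ ∈ Set.Ioo p q → z s₀ < 1 → False := by
    intro p q s₀ hp hpq hq hzp hzq hs₀ hzs₀
    have hpq' : Set.Icc p q ⊆ Set.Ioo a b := fun t ht => hsub ⟨le_trans hp ht.1, le_trans ht.2 hq⟩
    have hzc : ContinuousOn z (Set.Icc p q) := fun t ht =>
      ((hz' t (hpq' ht)).continuousAt).continuousWithinAt
    obtain ⟨m, hm, hmin⟩ := isCompact_Icc.exists_isMinOn (Set.nonempty_Icc.2 hpq.le) hzc
    have hzm : z m ≤ z s₀ := isMinOn_iff.mp hmin s₀ ⟨hs₀.1.le, hs₀.2.le⟩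
    have hzm1 : z m < 1 := lt_of_le_of_lt hzm hzs₀
    have hmp : m ≠ p := by rintro rfl; linarith
    have hmq : m ≠ q := by rintro rfl; linarith
    have hm' : m ∈ Set.Ioo p q := ⟨lt_of_le_of_ne hm.1 (Ne.symm hmp), lt_of_le_of_ne hm.2 hmq⟩
    have hloc : IsLocalMin z m := hmin.isLocalMin (Icc_mem_nhds hm'.1 hm'.2)
    have hsin0 : Real.sin (θ m) = 0 := hloc.hasDerivAt_eq_zero (hz' m (hpq' hm))
    have hcos1 : Real.cos (θ m) ^ 2 = 1 := by
      have h := Real.sin_sq_add_cos_sq (θ m); rw [hsin0] at h; nlinarith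
    have hmab := hpq' hm
    have h1 := heq m hmab
    rw [hcos1] at h1
    have hzmpos := hzpos m hmab
    have h2 : 1 / z m ^ 2 ≤ 1 := by nlinarith [sq_nonneg (θ' m)]
    have h3 : 1 ≤ z m ^ 2 := by rw [div_le_one (by positivity)] at h2; exact h2
    nlinarith
  -- Lα: entry point construction
  have Lα : ∀ s : ℝ, t₀ < s → s ≤ t₀ + δ₀ → z s < 1 →
      ∃ α, t₀ ≤ α ∧ α < s ∧ 1 ≤ z α ∧ ∀ t, α < t → t ≤ s → z t < 1 := by
    intro s hs1 hs2 hzs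
    have hSsub : Set.Icc t₀ s ⊆ Set.Ioo a b := fun t ht => hsub ⟨ht.1, le_trans ht.2 hs2⟩
    have hzc : ContinuousOn z (Set.Icc t₀ s) := fun t ht =>
      ((hz' t (hSsub ht)).continuousAt).continuousWithinAt
    have hclosed : IsClosed (Set.Icc t₀ s ∩ z ⁻¹' Set.Ici 1) :=
      hzc.preimage_isClosed_of_isClosed isClosed_Icc isClosed_Ici
    have hne : (Set.Icc t₀ s ∩ z ⁻¹' Set.Ici 1).Nonempty :=
      ⟨t₀, ⟨le_refl _, hs1.le⟩, by simp [Set.mem_preimage, hz1]⟩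
    have hbdd : BddAbove (Set.Icc t₀ s ∩ z ⁻¹' Set.Ici 1) := ⟨s, fun t ht => ht.1.2⟩
    have hαS : sSup (Set.Icc t₀ s ∩ z ⁻¹' Set.Ici 1) ∈ Set.Icc t₀ s ∩ z ⁻¹' Set.Ici 1 :=
      hclosed.csSup_mem hne hbdd
    have hzα : 1 ≤ z (sSup (Set.Icc t₀ s ∩ z ⁻¹' Set.Ici 1)) := hαS.2
    have hα1 : t₀ ≤ sSup (Set.Icc t₀ s ∩ z ⁻¹' Set.Ici 1) := hαS.1.1
    have hα2 : sSup (Set.Icc t₀ s ∩ z ⁻¹' Set.Ici 1) ≤ s := hαS.1.2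
    have hαs : sSup (Set.Icc t₀ s ∩ z ⁻¹' Set.Ici 1) < s := by
      rcases lt_or_eq_of_le hα2 with h | h
      · exact h
      · rw [h] at hzα; linarith
    refine ⟨sSup (Set.Icc t₀ s ∩ z ⁻¹' Set.Ici 1), hα1, hαs, hzα, fun t ht1 ht2 => ?_⟩
    by_contra hzt
    push_neg at hzt
    have hmem2 : t ∈ Set.Icc t₀ s ∩ z ⁻¹' Set.Ici 1 := ⟨⟨le_trans hα1 ht1.le, ht2⟩, hzt⟩
    have := le_csSup hbdd hmem2
    linarith
  -- L3: Gronwall rigidity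
  have L3 : ∀ x, t₀ < x → x ≤ t₀ + δ₀ → (∀ t ∈ Set.Icc t₀ x, z t ≤ 1) → z x = 1 := by
    intro x hx1 hx2 hle
    have hxsub : Set.Icc t₀ x ⊆ Set.Ioo a b := fun t ht => hsub ⟨ht.1, le_trans ht.2 hx2⟩
    have hxhalf : ∀ t ∈ Set.Icc t₀ x, 1/2 < z t := fun t ht => hzhalf t ⟨ht.1, le_trans ht.2 hx2⟩
    have hsin : ∀ t ∈ Set.Icc t₀ x, Real.sin (θ t) = 0 := by
      have hcont : ContinuousOn (fun t => Real.sin (θ t)) (Set.Icc t₀ x) :=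
        Real.continuous_sin.comp_continuousOn (fun t ht =>
          ((hθ t (hxsub ht)).continuousAt).continuousWithinAt)
      have hderiv : ∀ t ∈ Set.Ico t₀ x, HasDerivWithinAt (fun t => Real.sin (θ t))
          (Real.cos (θ t) * θ' t) (Set.Ici t) t :=
        fun t ht => ((hθ t (hxsub ⟨ht.1, ht.2.le⟩)).sin).hasDerivWithinAt
      have hbound : ∀ t ∈ Set.Ico t₀ x,
          ‖Real.cos (θ t) * θ' t‖ ≤ 2 * ‖Real.sin (θ t)‖ + 0 := by
        intro t ht
        have htm : t ∈ Set.Icc t₀ x := ⟨ht.1, ht.2.le⟩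
        have htab := hxsub htm
        have h1 := heq t htab
        have hzp := hzpos t htab
        have hzh := hxhalf t htm
        have hzo := hle t htm
        have hsc := Real.sin_sq_add_cos_sq (θ t)
        have hc0 : (0:ℝ) ≤ Real.cos (θ t)^2 := sq_nonneg _
        have hwpos : 0 < z t ^ 2 := by positivity
        have hz21 : z t ^ 2 ≤ 1 := by nlinarith
        have hcw : Real.cos (θ t)^2 ≤ Real.cos (θ t)^2 / z t ^ 2 := by
          rw [le_div_iff₀ hwpos]
          nlinarith [mul_le_mul_of_nonneg_left hz21 hc0]
        have key : θ' t ^ 2 ≤ 4 * Real.sin (θ t)^2 := by nlinarith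
        rw [Real.norm_eq_abs, Real.norm_eq_abs, add_zero]
        have h4 : |Real.cos (θ t) * θ' t| ≤ |θ' t| := by
          rw [abs_mul]; exact mul_le_of_le_one_left (abs_nonneg _) (Real.abs_cos_le_one _)
        have h5 : |θ' t| ≤ 2 * |Real.sin (θ t)| := by
          nlinarith [abs_nonneg (θ' t), abs_nonneg (Real.sin (θ t)), sq_abs (θ' t),
            sq_abs (Real.sin (θ t))]
        linarith
      have hg := norm_le_gronwallBound_of_norm_deriv_right_le (δ := 0) (K := 2) (ε := 0)
        hcont hderiv (by simp [hs0]) hbound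
      intro t ht
      have h := hg t ht
      rw [gronwallBound_ε0] at h
      simp only [zero_mul] at h
      have := norm_nonneg (Real.sin (θ t))
      have h0 : ‖Real.sin (θ t)‖ = 0 := le_antisymm (by linarith) this
      simpa using h0
    have hcont2 : ContinuousOn (fun t => z t - 1) (Set.Icc t₀ x) := fun t ht =>
      (((hz' t (hxsub ht)).continuousAt).sub continuousAt_const).continuousWithinAt
    have hderiv2 : ∀ t ∈ Set.Ico t₀ x, HasDerivWithinAt (fun t => z t - 1)
        (Real.sin (θ t)) (Set.Ici t) t :=
      fun t ht => ((hz' t (hxsub ⟨ht.1, ht.2.le⟩)).sub_const 1).hasDerivWithinAt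
    have hbound2 : ∀ t ∈ Set.Ico t₀ x, ‖Real.sin (θ t)‖ ≤ 0 * ‖z t - 1‖ + 0 := by
      intro t ht; rw [hsin t ⟨ht.1, ht.2.le⟩]; simp
    have hg2 := norm_le_gronwallBound_of_norm_deriv_right_le (δ := 0) (K := 0) (ε := 0)
      hcont2 hderiv2 (by simp [hz1]) hbound2 x (Set.right_mem_Icc.2 hx1.le)
    rw [gronwallBound_K0] at hg2
    simp only [zero_mul, add_zero, zero_add] at hg2
    have := norm_nonneg (z x - 1)
    have h0' : ‖z x - 1‖ = 0 := le_antisymm (by linarith) this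
    have : z x - 1 = 0 := by simpa using h0'
    linarith
  -- main assembly
  obtain ⟨s₁, hs₁mem, hzs₁⟩ := hcon' δ₀ hδ₀
  obtain ⟨α, hα1, hα2, hzα, hprop⟩ := Lα s₁ hs₁mem.1 hs₁mem.2 hzs₁
  by_cases hq : ∃ q ∈ Set.Icc s₁ (t₀ + δ₀), 1 ≤ z q
  · obtain ⟨q, hqmem, hzq⟩ := hq
    have hs₁q : s₁ < q := lt_of_le_of_ne hqmem.1 (by rintro rfl; linarith)
    exact L1 α q s₁ hα1 (hα2.trans hs₁q) hqmem.2 hzα hzq ⟨hα2, hs₁q⟩ hzs₁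
  · push_neg at hq
    by_cases hαt : α = t₀
    · have hle : ∀ t ∈ Set.Icc t₀ s₁, z t ≤ 1 := by
        intro t ht
        rcases eq_or_lt_of_le ht.1 with h | h
        · rw [← h, hz1]
        · exact (hprop t (hαt ▸ h) ht.2).le
      have := L3 s₁ hs₁mem.1 hs₁mem.2 hle
      linarith
    · have hαt' : t₀ < α := lt_of_le_of_ne hα1 (Ne.symm hαt)
      have hαab : α ∈ Set.Ioo a b := hsub ⟨hα1, hα2.le.trans hs₁mem.2⟩
      have hzα1 : z α = 1 := by
        have h1 : Filter.Tendsto z (𝓝[>] α) (𝓝 (z α)) :=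
          ((hz' α hαab).continuousAt).continuousWithinAt
        have hIoc : Set.Ioc α s₁ ∈ 𝓝[>] α := Ioc_mem_nhdsGT_of_mem ⟨le_refl α, hα2⟩
        have hev : ∀ᶠ t in 𝓝[>] α, z t ≤ 1 := by
          filter_upwards [hIoc] with t ht
          exact (hprop t ht.1 ht.2).le
        have := le_of_tendsto h1 hev
        linarith
      obtain ⟨s₂, hs₂mem, hzs₂⟩ := hcon' (α - t₀) (by linarith)
      have hs₂le : s₂ ≤ α := by have := hs₂mem.2; linarith
      have hs₂α : s₂ < α := lt_of_le_of_ne hs₂le (by rintro rfl; linarith)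
      have hαδ : α ≤ t₀ + δ₀ := hα2.le.trans hs₁mem.2
      obtain ⟨α₂, hα₂1, hα₂2, hzα₂, hprop₂⟩ := Lα s₂ hs₂mem.1 (by linarith) hzs₂
      exact L1 α₂ α s₂ hα₂1 (hα₂2.trans hs₂α) hαδ hzα₂ (by rw [hzα1]) ⟨hα₂2, hs₂α⟩ hzs₂

theorem z_ge_one_near (a b t₀ : ℝ) (θ z θ' : ℝ → ℝ)
    (ht₀ : t₀ ∈ Set.Ioo a b)
    (hzpos : ∀ t ∈ Set.Ioo a b, 0 < z t)
    (hθ : ∀ t ∈ Set.Ioo a b, HasDerivAt θ (θ' t) t)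
    (hθ'c : ContinuousOn θ' (Set.Ioo a b))
    (hz' : ∀ t ∈ Set.Ioo a b, HasDerivAt z (Real.sin (θ t)) t)
    (heq : ∀ t ∈ Set.Ioo a b, (θ' t) ^ 2 + (Real.cos (θ t)) ^ 2 / (z t) ^ 2 = 1)
    (h0 : θ' t₀ = 0) :
    ∃ δ > 0, ∀ s ∈ Set.Ioo (t₀ - δ) (t₀ + δ) ∩ Set.Ioo a b, 1 ≤ z s := by
  have hzpos₀ := hzpos t₀ ht₀
  have hzne : z t₀ ≠ 0 := ne_of_gt hzpos₀
  -- Step 1: z t₀ = 1 and sin (θ t₀) = 0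
  have hw : ∀ t ∈ Set.Ioo a b, HasDerivAt (fun t => Real.cos (θ t) / z t)
      ((-Real.sin (θ t) * θ' t * z t - Real.cos (θ t) * Real.sin (θ t)) / z t ^ 2) t :=
    fun t ht => ((hθ t ht).cos).div (hz' t ht) (ne_of_gt (hzpos t ht))
  have hwsq : ∀ t ∈ Set.Ioo a b, (Real.cos (θ t) / z t) ^ 2 ≤ 1 := by
    intro t ht
    have h := heq t ht
    have hd : (Real.cos (θ t) / z t) ^ 2 = Real.cos (θ t) ^ 2 / z t ^ 2 := div_pow _ _ _
    nlinarith [sq_nonneg (θ' t)]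
  have hw0 : (Real.cos (θ t₀) / z t₀) ^ 2 = 1 := by
    have h := heq t₀ ht₀
    rw [h0] at h
    rw [div_pow]
    nlinarith
  have hD : (-Real.sin (θ t₀) * θ' t₀ * z t₀ - Real.cos (θ t₀) * Real.sin (θ t₀)) / z t₀ ^ 2
      = 0 := by
    rcases mul_self_eq_one_iff.mp (by nlinarith :
        (Real.cos (θ t₀) / z t₀) * (Real.cos (θ t₀) / z t₀) = 1) with h1 | h1
    · have hmax : IsLocalMax (fun t => Real.cos (θ t) / z t) t₀ := by
        filter_upwards [isOpen_Ioo.mem_nhds ht₀] with t ht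
        have h2 := hwsq t ht
        show Real.cos (θ t) / z t ≤ Real.cos (θ t₀) / z t₀
        rw [h1]
        nlinarith
      exact hmax.hasDerivAt_eq_zero (hw t₀ ht₀)
    · have hmin : IsLocalMin (fun t => Real.cos (θ t) / z t) t₀ := by
        filter_upwards [isOpen_Ioo.mem_nhds ht₀] with t ht
        have h2 := hwsq t ht
        show Real.cos (θ t₀) / z t₀ ≤ Real.cos (θ t) / z t
        rw [h1]
        nlinarith
      exact hmin.hasDerivAt_eq_zero (hw t₀ ht₀)
  rw [h0] at hD
  rw [div_eq_zero_iff] at hD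
  have hnum : -Real.sin (θ t₀) * 0 * z t₀ - Real.cos (θ t₀) * Real.sin (θ t₀) = 0 := by
    rcases hD with h | h
    · exact h
    · exact absurd h (by positivity)
  have hcs : Real.cos (θ t₀) * Real.sin (θ t₀) = 0 := by linear_combination -hnum
  have hcosne : Real.cos (θ t₀) ≠ 0 := by
    intro hc
    have h := heq t₀ ht₀
    rw [h0, hc] at h
    norm_num at h
  have hs0 : Real.sin (θ t₀) = 0 := by
    rcases mul_eq_zero.mp hcs with h | h
    · exact absurd h hcosne
    · exact h
  have hcos2 : Real.cos (θ t₀) ^ 2 = 1 := by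
    have h := Real.sin_sq_add_cos_sq (θ t₀); rw [hs0] at h; nlinarith
  have hz2 : z t₀ ^ 2 = 1 := by
    have h := heq t₀ ht₀
    rw [h0, hcos2] at h
    have hzp : (0:ℝ) < z t₀ ^ 2 := by positivity
    field_simp at h
    linarith
  have hz1 : z t₀ = 1 := by
    have hfac : (z t₀ - 1) * (z t₀ + 1) = 0 := by linear_combination hz2
    rcases mul_eq_zero.mp hfac with h | h
    · linarith
    · linarith
  -- right side
  obtain ⟨δ₁, hδ₁, H₁⟩ := aux_right a b t₀ θ z θ' ht₀ hzpos hθ hz' heq hz1 hs0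
  -- left side via reflection
  have ht₀' : t₀ ∈ Set.Ioo (2*t₀ - b) (2*t₀ - a) := ⟨by linarith [ht₀.2], by linarith [ht₀.1]⟩
  have hmem' : ∀ t, t ∈ Set.Ioo (2*t₀ - b) (2*t₀ - a) → (2*t₀ - t) ∈ Set.Ioo a b :=
    fun t ht => ⟨by linarith [ht.2], by linarith [ht.1]⟩
  have hlin : ∀ t : ℝ, HasDerivAt (fun u : ℝ => 2*t₀ - u) (-1) t := fun t => by
    simpa using (hasDerivAt_id t).const_sub (2*t₀)
  have hteq : 2*t₀ - t₀ = t₀ := by ring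
  obtain ⟨δ₂, hδ₂, H₂⟩ := aux_right (2*t₀ - b) (2*t₀ - a) t₀
    (fun t => -θ (2*t₀ - t)) (fun t => z (2*t₀ - t)) (fun t => θ' (2*t₀ - t)) ht₀'
    (fun t ht => hzpos _ (hmem' t ht))
    (fun t ht => by
      have h := ((hθ _ (hmem' t ht)).comp t (hlin t)).neg
      rw [show θ' (2*t₀ - t) = -(θ' (2*t₀ - t) * -1) by ring]
      exact h)
    (fun t ht => by
      have h := (hz' _ (hmem' t ht)).comp t (hlin t)
      have he : Real.sin (-θ (2*t₀ - t)) = Real.sin (θ (2*t₀ - t)) * (-1) := by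
        rw [Real.sin_neg]; ring
      rw [he]
      exact h)
    (fun t ht => by
      simp only [Real.cos_neg]
      exact heq _ (hmem' t ht))
    (by show z (2*t₀ - t₀) = 1; rw [hteq, hz1])
    (by show Real.sin (-θ (2*t₀ - t₀)) = 0; rw [hteq, Real.sin_neg, hs0, neg_zero])
  refine ⟨min δ₁ δ₂, lt_min hδ₁ hδ₂, fun s hs => ?_⟩
  obtain ⟨⟨hsl, hsr⟩, hsab⟩ := hs
  rcases lt_trichotomy s t₀ with h | h | h
  · have hmin2 : min δ₁ δ₂ ≤ δ₂ := min_le_right _ _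
    have hmem2 : (2*t₀ - s) ∈ Set.Ioc t₀ (t₀ + δ₂) := ⟨by linarith, by linarith⟩
    have := H₂ _ hmem2
    simpa [sub_sub_cancel] using this
  · rw [← h] at hz1; rw [hz1]
  · have hmin1 : min δ₁ δ₂ ≤ δ₁ := min_le_left _ _
    exact H₁ s ⟨h, by linarith⟩
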